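/- The matrix identities A₀·U = U·(Q₀ + Q₁), (C₁ + C₀)·U = −U·V₀, and (C₁ − C₀)·U = U·(Q₁·J − Q₀·(J + 1)) hold, where 1 denotes the identity matrix (so that, U being invertible, U⁻¹A₀U = Q₀+Q₁, U⁻¹(C₁+C₀)U = −V₀ and U⁻¹(C₁−C₀)U = Q₁J − Q₀(J+1)). -/

import Mathlib

namespace Stmt0

/-- The matrix of Hahn polynomial values `U_{jk} = ₃F₂(-k, -j, k+1; 1, -ℓ; 1)`. -/
noncomputable def hahnU (ℓ : ℕ) : Matrix (Fin (ℓ+1)) (Fin (ℓ+1)) ℂ :=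
  Matrix.of fun j k =>
    ∑ m ∈ Finset.range (min (j:ℕ) (k:ℕ) + 1),
      ((ascPochhammer ℂ m).eval (-((k:ℕ):ℂ)) * (ascPochhammer ℂ m).eval (-((j:ℕ):ℂ)) *
        (ascPochhammer ℂ m).eval (((k:ℕ):ℂ) + 1)) /
      ((ascPochhammer ℂ m).eval 1 * (ascPochhammer ℂ m).eval (-(ℓ:ℂ)) * (Nat.factorial m : ℂ))

/-- `A₀ = Σ_j (ℓ - 2j) E_{jj}`. -/
noncomputable def A0 (ℓ : ℕ) : Matrix (Fin (ℓ+1)) (Fin (ℓ+1)) ℂ :=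
  Matrix.diagonal fun j => (ℓ:ℂ) - 2*((j:ℕ):ℂ)

/-- `C₀ = Σ_{j=1}^ℓ j(ℓ-j+1)(E_{j,j-1} - E_{jj})`. -/
noncomputable def C0 (ℓ : ℕ) : Matrix (Fin (ℓ+1)) (Fin (ℓ+1)) ℂ :=
  Matrix.of fun j k =>
    if (k:ℕ) + 1 = (j:ℕ) then ((j:ℕ):ℂ) * ((ℓ:ℂ) - ((j:ℕ):ℂ) + 1)
    else if j = k then -(((j:ℕ):ℂ) * ((ℓ:ℂ) - ((j:ℕ):ℂ) + 1))
    else 0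

/-- `C₁ = Σ_{j=0}^{ℓ-1} (j+1)(ℓ-j)(E_{j,j+1} - E_{jj})`. -/
noncomputable def C1 (ℓ : ℕ) : Matrix (Fin (ℓ+1)) (Fin (ℓ+1)) ℂ :=
  Matrix.of fun j k =>
    if (j:ℕ) + 1 = (k:ℕ) then (((j:ℕ):ℂ) + 1) * ((ℓ:ℂ) - ((j:ℕ):ℂ))
    else if j = k then -((((j:ℕ):ℂ) + 1) * ((ℓ:ℂ) - ((j:ℕ):ℂ)))
    else 0

/-- `V₀ = Σ_j j(j+1) E_{jj}`. -/
noncomputable def V0 (ℓ : ℕ) : Matrix (Fin (ℓ+1)) (Fin (ℓ+1)) ℂ :=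
  Matrix.diagonal fun j => ((j:ℕ):ℂ) * (((j:ℕ):ℂ) + 1)

/-- `J = Σ_j j E_{jj}`. -/
noncomputable def Jmat (ℓ : ℕ) : Matrix (Fin (ℓ+1)) (Fin (ℓ+1)) ℂ :=
  Matrix.diagonal fun j => ((j:ℕ):ℂ)

/-- `Q₀ = Σ_{j=0}^{ℓ-1} ((j+1)(ℓ+j+2)/(2j+3)) E_{j,j+1}`. -/
noncomputable def Q0 (ℓ : ℕ) : Matrix (Fin (ℓ+1)) (Fin (ℓ+1)) ℂ :=
  Matrix.of fun j k =>
    if (j:ℕ) + 1 = (k:ℕ) then (((j:ℕ):ℂ) + 1) * ((ℓ:ℂ) + ((j:ℕ):ℂ) + 2) / (2*((j:ℕ):ℂ) + 3)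
    else 0

/-- `Q₁ = Σ_{j=1}^{ℓ} (j(ℓ-j+1)/(2j-1)) E_{j,j-1}`. -/
noncomputable def Q1 (ℓ : ℕ) : Matrix (Fin (ℓ+1)) (Fin (ℓ+1)) ℂ :=
  Matrix.of fun j k =>
    if (k:ℕ) + 1 = (j:ℕ) then ((j:ℕ):ℂ) * ((ℓ:ℂ) - ((j:ℕ):ℂ) + 1) / (2*((j:ℕ):ℂ) - 1)
    else 0

/-! ### Auxiliary scalar theory -/

open Polynomial Finset

/-- `P m x = (x)_m`, the ascending Pochhammer symbol evaluated at `x`. -/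
noncomputable def P (m : ℕ) (x : ℂ) : ℂ := (ascPochhammer ℂ m).eval x

lemma P_zero (x : ℂ) : P 0 x = 1 := by simp [P]

lemma P_hi (m : ℕ) (x : ℂ) : P (m+1) x = P m x * (x + m) := ascPochhammer_succ_eval m x

lemma P_lo (m : ℕ) (x : ℂ) : P (m+1) x = x * P m (x+1) := by
  simp [P, ascPochhammer_succ_left, Polynomial.eval_comp]

lemma P_cross (m : ℕ) (x : ℂ) : x * P m (x+1) = P m x * (x + m) := by
  rw [← P_lo, P_hi]

lemma P_one_eval (m : ℕ) : P m 1 = (m.factorial : ℂ) := by simp [P]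

lemma P_eq_prod (m : ℕ) (x : ℂ) : P m x = ∏ i ∈ range m, (x + i) := by
  induction m with
  | zero => simp [P]
  | succ n ih => rw [P_hi, ih, prod_range_succ]

lemma P_nat_neg_zero {n m : ℕ} (h : n < m) : P m (-(n:ℂ)) = 0 := by
  rw [P_eq_prod]
  exact Finset.prod_eq_zero (Finset.mem_range.2 h) (by simp)

lemma P_nat_neg_ne_zero {n m : ℕ} (h : m ≤ n) : P m (-(n:ℂ)) ≠ 0 := by
  rw [P_eq_prod]
  refine Finset.prod_ne_zero_iff.2 fun i hi => ?_
  have hi' : i < n := lt_of_lt_of_le (Finset.mem_range.1 hi) h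
  intro hc
  have : (i:ℂ) = (n:ℂ) := by linear_combination hc
  exact absurd (Nat.cast_injective this) (Nat.ne_of_lt hi')

/-- Term of the (extended) Hahn sum, with complex arguments. -/
noncomputable def tc (ℓ m : ℕ) (x y : ℂ) : ℂ :=
  (P m (-y) * P m (-x) * P m (y+1)) / (P m 1 * P m (-(ℓ:ℂ)) * (m.factorial : ℂ))

lemma tc_zero (ℓ : ℕ) (x y : ℂ) : tc ℓ 0 x y = 1 := by
  simp [tc, P_zero]

lemma tc_succ (ℓ m : ℕ) (x y : ℂ) :
    tc ℓ (m+1) x y =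
      (P m (-y) * (-y+m) * (P m (-x) * (-x+m)) * (P m (y+1) * (y+1+m))) /
        (P m 1 * (1+m) * (P m (-(ℓ:ℂ)) * (-(ℓ:ℂ)+m)) * ((m.factorial : ℂ) * (m+1))) := by
  rw [tc, P_hi m (-y), P_hi m (-x), P_hi m (y+1), P_hi m 1, P_hi m (-(ℓ:ℂ)),
    Nat.factorial_succ, Nat.cast_mul, Nat.cast_add, Nat.cast_one]
  ring

lemma tc_succ_ym (ℓ m : ℕ) (x y : ℂ) :
    tc ℓ (m+1) x (y-1) =
      (P m (-y) * (y-m) * (1-y+m) * (P m (-x) * (-x+m)) * P m (y+1)) /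
        (P m 1 * (1+m) * (P m (-(ℓ:ℂ)) * (-(ℓ:ℂ)+m)) * ((m.factorial : ℂ) * (m+1))) := by
  have e3 : (-y) * P m ((-y)+1) = P m (-y) * ((-y) + m) := P_cross m (-y)
  rw [tc, show -(y-1) = -y+1 by ring, show y-1+1 = y by ring,
    P_hi m (-y+1), P_lo m y, P_hi m (-x), P_hi m 1, P_hi m (-(ℓ:ℂ)),
    Nat.factorial_succ, Nat.cast_mul, Nat.cast_add, Nat.cast_one]
  linear_combination (-((1-y+(m:ℂ)) * P m (y+1) * (P m (-x) * (-x+m))) /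
    (P m 1 * (1+(m:ℂ)) * (P m (-(ℓ:ℂ)) * (-(ℓ:ℂ)+m)) * (((m:ℂ)+1) * (m.factorial : ℂ)))) * e3

lemma tc_succ_yp (ℓ m : ℕ) (x y : ℂ) :
    tc ℓ (m+1) x (y+1) =
      (-(P m (-y) * (P m (y+1) * (y+1+m) * (y+2+m))) * (P m (-x) * (-x+m))) /
        (P m 1 * (1+m) * (P m (-(ℓ:ℂ)) * (-(ℓ:ℂ)+m)) * ((m.factorial : ℂ) * (m+1))) := by
  have e3 : (y+1) * P m ((y+1)+1) = P m (y+1) * ((y+1) + m) := P_cross m (y+1)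
  rw [show (y+1)+1 = y+2 by ring] at e3
  rw [tc, P_lo m (-(y+1)), show -(y+1)+1 = -y by ring, show y+1+1 = y+2 by ring,
    P_hi m (y+2), P_hi m (-x), P_hi m 1, P_hi m (-(ℓ:ℂ)),
    Nat.factorial_succ, Nat.cast_mul, Nat.cast_add, Nat.cast_one]
  linear_combination (-(P m (-y) * (y+2+(m:ℂ)) * (P m (-x) * (-x+m))) /
    (P m 1 * (1+(m:ℂ)) * (P m (-(ℓ:ℂ)) * (-(ℓ:ℂ)+m)) * (((m:ℂ)+1) * (m.factorial : ℂ)))) * e3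

lemma tc_succ_xp (ℓ m : ℕ) (x y : ℂ) :
    tc ℓ (m+1) (x+1) y =
      (P m (-y) * (-y+m) * (-(x+1) * P m (-x)) * (P m (y+1) * (y+1+m))) /
        (P m 1 * (1+m) * (P m (-(ℓ:ℂ)) * (-(ℓ:ℂ)+m)) * ((m.factorial : ℂ) * (m+1))) := by
  rw [tc, P_lo m (-(x+1)), show -(x+1)+1 = -x by ring,
    P_hi m (-y), P_hi m (y+1), P_hi m 1, P_hi m (-(ℓ:ℂ)),
    Nat.factorial_succ, Nat.cast_mul, Nat.cast_add, Nat.cast_one]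
  ring

lemma tc_succ_xm (ℓ m : ℕ) (x y : ℂ) :
    x * tc ℓ (m+1) (x-1) y =
      (P m (-y) * (-y+m) * (P m (-x) * (x-m) * (1-x+m)) * (P m (y+1) * (y+1+m))) /
        (P m 1 * (1+m) * (P m (-(ℓ:ℂ)) * (-(ℓ:ℂ)+m)) * ((m.factorial : ℂ) * (m+1))) := by
  have e3 : (-x) * P m ((-x)+1) = P m (-x) * ((-x) + m) := P_cross m (-x)
  rw [tc, show -(x-1) = -x+1 by ring, P_hi m (-x+1),
    P_hi m (-y), P_hi m (y+1), P_hi m 1, P_hi m (-(ℓ:ℂ)),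
    Nat.factorial_succ, Nat.cast_mul, Nat.cast_add, Nat.cast_one]
  linear_combination (-(P m (-y) * (-y+(m:ℂ)) * (P m (y+1) * (y+1+m)) * (1-x+(m:ℂ))) /
    (P m 1 * (1+(m:ℂ)) * (P m (-(ℓ:ℂ)) * (-(ℓ:ℂ)+m)) * (((m:ℂ)+1) * (m.factorial : ℂ)))) * e3

lemma cast_ne_of_lt {m ℓ : ℕ} (hm : m < ℓ) : (-(ℓ:ℂ)+m) ≠ 0 := by
  intro h
  have : (m:ℂ) = (ℓ:ℂ) := by linear_combination h
  exact absurd (Nat.cast_injective this) (Nat.ne_of_lt hm)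

lemma tc_eq_D {ℓ m : ℕ} (hm : m < ℓ) (x y : ℂ) :
    tc ℓ m x y =
      (P m (-y) * P m (-x) * P m (y+1) * ((1+(m:ℂ)) * (-(ℓ:ℂ)+m) * ((m:ℂ)+1))) /
        (P m 1 * (1+m) * (P m (-(ℓ:ℂ)) * (-(ℓ:ℂ)+m)) * ((m.factorial : ℂ) * (m+1))) := by
  have h1 : P m 1 ≠ 0 := by rw [P_one_eval]; exact_mod_cast Nat.factorial_ne_zero m
  have h2 : P m (-(ℓ:ℂ)) ≠ 0 := P_nat_neg_ne_zero hm.le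
  have h3 : (m.factorial : ℂ) ≠ 0 := by exact_mod_cast Nat.factorial_ne_zero m
  have h4 : (-(ℓ:ℂ)+m) ≠ 0 := cast_ne_of_lt hm
  have h5 : ((m:ℂ)+1) ≠ 0 := by exact_mod_cast Nat.succ_ne_zero m
  have h6 : (1+(m:ℂ)) ≠ 0 := by rw [add_comm]; exact h5
  rw [tc, div_eq_div_iff (mul_ne_zero (mul_ne_zero h1 h2) h3)
    (mul_ne_zero (mul_ne_zero (mul_ne_zero h1 h6) (mul_ne_zero h2 h4)) (mul_ne_zero h3 h5))]
  ring

/-! ### The three one-step (telescoping) identities -/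

lemma step1 {ℓ m : ℕ} (hm : m < ℓ) (x y : ℂ) :
    (2*y+1) * (((ℓ:ℂ)-2*x) * tc ℓ (m+1) x y)
      - y*((ℓ:ℂ)+y+1) * tc ℓ (m+1) x (y-1)
      - (y+1)*((ℓ:ℂ)-y) * tc ℓ (m+1) x (y+1)
    = (2*y+1) * (2*(x-(m:ℂ)) * tc ℓ m x y - 2*(x-((m:ℂ)+1)) * tc ℓ (m+1) x y) := by
  rw [tc_succ, tc_succ_ym, tc_succ_yp, tc_eq_D hm]
  ring

lemma step2 {ℓ m : ℕ} (hm : m < ℓ) (x y : ℂ) :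
    (x+1)*((ℓ:ℂ)-x) * tc ℓ (m+1) (x+1) y + ((ℓ:ℂ)+1-x) * (x * tc ℓ (m+1) (x-1) y)
      - ((x+1)*((ℓ:ℂ)-x) + x*((ℓ:ℂ)+1-x)) * tc ℓ (m+1) x y + y*(y+1) * tc ℓ (m+1) x y
    = (y*(y+1) - ((m:ℂ)+1)*((m:ℂ)+2)) * tc ℓ (m+1) x y
      - (y*(y+1) - (m:ℂ)*((m:ℂ)+1)) * tc ℓ m x y := by
  rw [tc_succ_xp, tc_succ_xm, tc_succ, tc_eq_D hm]
  ring

lemma step3 {ℓ m : ℕ} (hm : m < ℓ) (x y : ℂ) :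
    (2*y+1) * ((x+1)*((ℓ:ℂ)-x) * tc ℓ (m+1) (x+1) y
        - ((ℓ:ℂ)+1-x) * (x * tc ℓ (m+1) (x-1) y) + (2*x-(ℓ:ℂ)) * tc ℓ (m+1) x y)
      - y*(y+1)*((ℓ:ℂ)-y) * tc ℓ (m+1) x (y+1)
      + y*(y+1)*((ℓ:ℂ)+y+1) * tc ℓ (m+1) x (y-1)
    = (2*y+1) * ((-(y*(y+1)) + 2*(m:ℂ)*x - (m:ℂ)*((m:ℂ)-1)) * tc ℓ m x y
        - (-(y*(y+1)) + 2*((m:ℂ)+1)*x - ((m:ℂ)+1)*(m:ℂ)) * tc ℓ (m+1) x y) := by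
  rw [tc_succ_xp, tc_succ_xm, tc_succ_ym, tc_succ_yp, tc_succ, tc_eq_D hm]
  ring

/-! ### Summed (master) identities -/

/-- The full extended Hahn sum. -/
noncomputable def S (ℓ : ℕ) (x y : ℂ) : ℂ := ∑ m ∈ range (ℓ+1), tc ℓ m x y

lemma master1 (ℓ : ℕ) (x y : ℂ) (hb : (x-(ℓ:ℂ)) * tc ℓ ℓ x y = 0) :
    (2*y+1) * (((ℓ:ℂ)-2*x) * S ℓ x y)
      = y*((ℓ:ℂ)+y+1) * S ℓ x (y-1) + (y+1)*((ℓ:ℂ)-y) * S ℓ x (y+1) := by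
  have key : ∀ n : ℕ, n ≤ ℓ →
      (2*y+1) * (((ℓ:ℂ)-2*x) * ∑ m ∈ range (n+1), tc ℓ m x y)
        - y*((ℓ:ℂ)+y+1) * ∑ m ∈ range (n+1), tc ℓ m x (y-1)
        - (y+1)*((ℓ:ℂ)-y) * ∑ m ∈ range (n+1), tc ℓ m x (y+1)
      = -((2*y+1) * (2*(x-(n:ℂ)) * tc ℓ n x y)) := by
    intro n
    induction n with
    | zero =>
      intro _
      simp only [zero_add, Finset.sum_range_one, tc_zero, Nat.cast_zero]
      ring
    | succ p ih =>
      intro hn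
      have hp : p < ℓ := by omega
      simp only [Finset.sum_range_succ]
      have hst := step1 hp x y
      have ih' := ih (by omega)
      simp only [Finset.sum_range_succ] at ih'
      push_cast
      linear_combination ih' + hst
  have h := key ℓ le_rfl
  have hS : ∀ z : ℂ, S ℓ x z = ∑ m ∈ range (ℓ+1), tc ℓ m x z := fun _ => rfl
  rw [hS, hS, hS]
  linear_combination h - 2*(2*y+1) * hb

lemma master2 (ℓ : ℕ) (x y : ℂ)
    (hb : (y*(y+1) - (ℓ:ℂ)*((ℓ:ℂ)+1)) * tc ℓ ℓ x y = 0) :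
    (x+1)*((ℓ:ℂ)-x) * S ℓ (x+1) y + ((ℓ:ℂ)+1-x) * (x * S ℓ (x-1) y)
      - ((x+1)*((ℓ:ℂ)-x) + x*((ℓ:ℂ)+1-x)) * S ℓ x y
    = -(y*(y+1)) * S ℓ x y := by
  have key : ∀ n : ℕ, n ≤ ℓ →
      (x+1)*((ℓ:ℂ)-x) * ∑ m ∈ range (n+1), tc ℓ m (x+1) y
        + ((ℓ:ℂ)+1-x) * (x * ∑ m ∈ range (n+1), tc ℓ m (x-1) y)
        - ((x+1)*((ℓ:ℂ)-x) + x*((ℓ:ℂ)+1-x)) * ∑ m ∈ range (n+1), tc ℓ m x y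
        + y*(y+1) * ∑ m ∈ range (n+1), tc ℓ m x y
      = (y*(y+1) - (n:ℂ)*((n:ℂ)+1)) * tc ℓ n x y := by
    intro n
    induction n with
    | zero =>
      intro _
      simp only [zero_add, Finset.sum_range_one, tc_zero, Nat.cast_zero]
      ring
    | succ p ih =>
      intro hn
      have hp : p < ℓ := by omega
      simp only [Finset.sum_range_succ]
      have hst := step2 hp x y
      have ih' := ih (by omega)
      simp only [Finset.sum_range_succ] at ih'
      push_cast
      linear_combination ih' + hst
  have h := key ℓ le_rfl
  have hS : ∀ u z : ℂ, S ℓ u z = ∑ m ∈ range (ℓ+1), tc ℓ m u z := fun _ _ => rfl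
  rw [hS, hS, hS]
  linear_combination h + hb

lemma master3 (ℓ : ℕ) (x y : ℂ)
    (hb : (-(y*(y+1)) + 2*(ℓ:ℂ)*x - (ℓ:ℂ)*((ℓ:ℂ)-1)) * tc ℓ ℓ x y = 0) :
    (2*y+1) * ((x+1)*((ℓ:ℂ)-x) * S ℓ (x+1) y
        - ((ℓ:ℂ)+1-x) * (x * S ℓ (x-1) y) + (2*x-(ℓ:ℂ)) * S ℓ x y)
      = y*(y+1)*((ℓ:ℂ)-y) * S ℓ x (y+1) - y*(y+1)*((ℓ:ℂ)+y+1) * S ℓ x (y-1) := by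
  have key : ∀ n : ℕ, n ≤ ℓ →
      (2*y+1) * ((x+1)*((ℓ:ℂ)-x) * ∑ m ∈ range (n+1), tc ℓ m (x+1) y
          - ((ℓ:ℂ)+1-x) * (x * ∑ m ∈ range (n+1), tc ℓ m (x-1) y)
          + (2*x-(ℓ:ℂ)) * ∑ m ∈ range (n+1), tc ℓ m x y)
        - y*(y+1)*((ℓ:ℂ)-y) * ∑ m ∈ range (n+1), tc ℓ m x (y+1)
        + y*(y+1)*((ℓ:ℂ)+y+1) * ∑ m ∈ range (n+1), tc ℓ m x (y-1)
      = -((2*y+1) * ((-(y*(y+1)) + 2*(n:ℂ)*x - (n:ℂ)*((n:ℂ)-1)) * tc ℓ n x y)) := by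
    intro n
    induction n with
    | zero =>
      intro _
      simp only [zero_add, Finset.sum_range_one, tc_zero, Nat.cast_zero]
      ring
    | succ p ih =>
      intro hn
      have hp : p < ℓ := by omega
      simp only [Finset.sum_range_succ]
      have hst := step3 hp x y
      have ih' := ih (by omega)
      simp only [Finset.sum_range_succ] at ih'
      push_cast
      linear_combination ih' + hst
  have h := key ℓ le_rfl
  have hS : ∀ u z : ℂ, S ℓ u z = ∑ m ∈ range (ℓ+1), tc ℓ m u z := fun _ _ => rfl
  rw [hS, hS, hS, hS, hS]
  linear_combination h - (2*y+1) * hb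


/-! ### Bridge to `hahnU` and finite-sum helpers -/

lemma hahnU_apply (ℓ : ℕ) (j k : Fin (ℓ+1)) :
    hahnU ℓ j k = S ℓ ((j:ℕ):ℂ) ((k:ℕ):ℂ) := by
  show ∑ m ∈ Finset.range (min (j:ℕ) (k:ℕ) + 1), tc ℓ m ((j:ℕ):ℂ) ((k:ℕ):ℂ)
      = S ℓ ((j:ℕ):ℂ) ((k:ℕ):ℂ)
  rw [S]
  apply Finset.sum_subset
  · exact Finset.range_subset_range.2 (by have := j.isLt; have := k.isLt; omega)
  · intro m hm hnm
    have hmin : min (j:ℕ) (k:ℕ) < m := by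
      simp only [Finset.mem_range] at hnm ⊢
      omega
    rcases min_lt_iff.1 hmin with h | h
    · rw [tc, P_nat_neg_zero h]
      simp
    · rw [tc, P_nat_neg_zero h]
      simp

lemma tc_top_x {ℓ j : ℕ} (hj : j < ℓ) (y : ℂ) : tc ℓ ℓ ((j:ℕ):ℂ) y = 0 := by
  rw [tc, P_nat_neg_zero hj]
  simp

lemma tc_top_y {ℓ k : ℕ} (hk : k < ℓ) (x : ℂ) : tc ℓ ℓ x ((k:ℕ):ℂ) = 0 := by
  rw [tc, P_nat_neg_zero hk]
  simp

lemma sum_ite_pred' {n k : ℕ} (hk : k < n) (g : ℕ → ℂ) :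
    (∑ i ∈ Finset.range n, if i+1 = k then g i else 0) = if 1 ≤ k then g (k-1) else 0 := by
  rcases k with _ | k'
  · simp
  · rw [if_pos (by omega)]
    have hcg : ∀ i ∈ Finset.range n, (if i+1 = k'+1 then g i else 0) = if i = k' then g i else 0 :=
      fun i _ => if_congr (by omega) rfl rfl
    rw [Finset.sum_congr rfl hcg, Finset.sum_ite_eq' (Finset.range n) k' g,
      if_pos (Finset.mem_range.2 (by omega))]
    rw [Nat.add_sub_cancel]

lemma sum_ite_succ' {n k : ℕ} (g : ℕ → ℂ) :
    (∑ i ∈ Finset.range n, if k+1 = i then g i else 0) = if k+1 < n then g (k+1) else 0 := by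
  rw [Finset.sum_ite_eq (Finset.range n) (k+1) g]
  exact if_congr (by rw [Finset.mem_range]) rfl rfl

lemma sum_ite_diag' {n k : ℕ} (hk : k < n) (g : ℕ → ℂ) :
    (∑ i ∈ Finset.range n, if k = i then g i else 0) = g k := by
  rw [Finset.sum_ite_eq (Finset.range n) k g, if_pos (Finset.mem_range.2 hk)]

/-! ### Identity 1 -/

lemma id1 (ℓ : ℕ) : A0 ℓ * hahnU ℓ = hahnU ℓ * (Q0 ℓ + Q1 ℓ) := by
  ext j k
  have hjl : (j:ℕ) ≤ ℓ := Nat.lt_succ_iff.1 j.isLt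
  have hkl : (k:ℕ) ≤ ℓ := Nat.lt_succ_iff.1 k.isLt
  rw [A0, Matrix.diagonal_mul, hahnU_apply, Matrix.mul_apply]
  have hrw : (∑ i : Fin (ℓ+1), hahnU ℓ j i * (Q0 ℓ + Q1 ℓ) i k)
      = ∑ i ∈ Finset.range (ℓ+1),
          ((if i+1 = (k:ℕ) then
              S ℓ ((j:ℕ):ℂ) ((i:ℕ):ℂ) * (((i:ℂ)+1) * ((ℓ:ℂ)+(i:ℂ)+2) / (2*(i:ℂ)+3)) else 0)
          + (if (k:ℕ)+1 = i then
              S ℓ ((j:ℕ):ℂ) ((i:ℕ):ℂ) * ((i:ℂ) * ((ℓ:ℂ)-(i:ℂ)+1) / (2*(i:ℂ)-1)) else 0)) := by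
    rw [← Fin.sum_univ_eq_sum_range]
    refine Finset.sum_congr rfl fun i _ => ?_
    rw [hahnU_apply, Matrix.add_apply, Q0, Q1, Matrix.of_apply, Matrix.of_apply]
    by_cases h1 : (i:ℕ)+1 = (k:ℕ) <;> by_cases h2 : (k:ℕ)+1 = (i:ℕ)
    · omega
    · rw [if_pos h1, if_pos h1, if_neg h2, if_neg h2]
      ring
    · rw [if_neg h1, if_neg h1, if_pos h2, if_pos h2]
      ring
    · rw [if_neg h1, if_neg h1, if_neg h2, if_neg h2]
      ring
  rw [hrw, Finset.sum_add_distrib, sum_ite_pred' k.isLt, sum_ite_succ']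
  -- master identity
  have hy : (2*((k:ℕ):ℂ)+1) ≠ 0 := by
    have h' : ((2*(k:ℕ)+1 : ℕ):ℂ) ≠ 0 := Nat.cast_ne_zero.2 (by omega)
    intro h
    exact h' (by push_cast; linear_combination h)
  have hb : (((j:ℕ):ℂ)-(ℓ:ℂ)) * tc ℓ ℓ ((j:ℕ):ℂ) ((k:ℕ):ℂ) = 0 := by
    by_cases hj : (j:ℕ) = ℓ
    · rw [hj, sub_self, zero_mul]
    · rw [tc_top_x (by omega), mul_zero]
  have hm := master1 ℓ ((j:ℕ):ℂ) ((k:ℕ):ℂ) hb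
  by_cases hk0 : 1 ≤ (k:ℕ)
  · rw [if_pos hk0]
    have hc1 : (((k:ℕ)-1 : ℕ):ℂ) = ((k:ℕ):ℂ)-1 := by
      rw [Nat.cast_sub hk0, Nat.cast_one]
    rw [hc1, show (((k:ℕ):ℂ)-1+1) * ((ℓ:ℂ)+(((k:ℕ):ℂ)-1)+2) = ((k:ℕ):ℂ)*((ℓ:ℂ)+((k:ℕ):ℂ)+1)
      from by ring, show 2*(((k:ℕ):ℂ)-1)+3 = 2*((k:ℕ):ℂ)+1 from by ring]
    by_cases hkl' : (k:ℕ)+1 < ℓ+1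
    · rw [if_pos hkl']
      have hc2 : (((k:ℕ)+1 : ℕ):ℂ) = ((k:ℕ):ℂ)+1 := by push_cast; ring
      rw [hc2, show (((k:ℕ):ℂ)+1) * ((ℓ:ℂ)-(((k:ℕ):ℂ)+1)+1) = (((k:ℕ):ℂ)+1)*((ℓ:ℂ)-((k:ℕ):ℂ))
        from by ring, show 2*(((k:ℕ):ℂ)+1)-1 = 2*((k:ℕ):ℂ)+1 from by ring,
        ← mul_div_assoc, ← mul_div_assoc, ← add_div, eq_div_iff hy]
      linear_combination hm
    · rw [if_neg hkl', add_zero, ← mul_div_assoc, eq_div_iff hy]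
      have hke : ((k:ℕ):ℂ) = (ℓ:ℂ) := by
        have h' : (k:ℕ) = ℓ := by omega
        rw [h']
      linear_combination hm - ((((k:ℕ):ℂ)+1) * S ℓ ((j:ℕ):ℂ) (((k:ℕ):ℂ)+1)) * hke
  · rw [if_neg hk0]
    have hk00 : ((k:ℕ):ℂ) = 0 := by
      have h' : (k:ℕ) = 0 := by omega
      rw [h', Nat.cast_zero]
    by_cases hkl' : (k:ℕ)+1 < ℓ+1
    · rw [if_pos hkl']
      have hc2 : (((k:ℕ)+1 : ℕ):ℂ) = ((k:ℕ):ℂ)+1 := by push_cast; ring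
      rw [hc2, show (((k:ℕ):ℂ)+1) * ((ℓ:ℂ)-(((k:ℕ):ℂ)+1)+1) = (((k:ℕ):ℂ)+1)*((ℓ:ℂ)-((k:ℕ):ℂ))
        from by ring, show 2*(((k:ℕ):ℂ)+1)-1 = 2*((k:ℕ):ℂ)+1 from by ring,
        zero_add, ← mul_div_assoc, eq_div_iff hy]
      linear_combination hm + (((ℓ:ℂ)+((k:ℕ):ℂ)+1) * S ℓ ((j:ℕ):ℂ) (((k:ℕ):ℂ)-1)) * hk00
    · rw [if_neg hkl', add_zero]
      have hke : ((k:ℕ):ℂ) = (ℓ:ℂ) := by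
        have h' : (k:ℕ) = ℓ := by omega
        rw [h']
      linear_combination hm
        + (-2*((ℓ:ℂ)-2*((j:ℕ):ℂ)) * S ℓ ((j:ℕ):ℂ) ((k:ℕ):ℂ)
            + ((ℓ:ℂ)+((k:ℕ):ℂ)+1) * S ℓ ((j:ℕ):ℂ) (((k:ℕ):ℂ)-1)) * hk00
        - ((((k:ℕ):ℂ)+1) * S ℓ ((j:ℕ):ℂ) (((k:ℕ):ℂ)+1)) * hke


/-! ### Identity 2 -/

lemma id2 (ℓ : ℕ) : (C1 ℓ + C0 ℓ) * hahnU ℓ = -(hahnU ℓ * V0 ℓ) := by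
  ext j k
  have hjl : (j:ℕ) ≤ ℓ := Nat.lt_succ_iff.1 j.isLt
  have hkl : (k:ℕ) ≤ ℓ := Nat.lt_succ_iff.1 k.isLt
  rw [Matrix.neg_apply, V0, Matrix.mul_diagonal, hahnU_apply, Matrix.mul_apply]
  have hrw : (∑ i : Fin (ℓ+1), (C1 ℓ + C0 ℓ) j i * hahnU ℓ i k)
      = ∑ i ∈ Finset.range (ℓ+1),
          ((if i+1 = (j:ℕ) then ((j:ℕ):ℂ)*((ℓ:ℂ)-((j:ℕ):ℂ)+1) * S ℓ ((i:ℕ):ℂ) ((k:ℕ):ℂ) else 0)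
          + (if (j:ℕ)+1 = i then (((j:ℕ):ℂ)+1)*((ℓ:ℂ)-((j:ℕ):ℂ)) * S ℓ ((i:ℕ):ℂ) ((k:ℕ):ℂ) else 0)
          + (if (j:ℕ) = i then
              -((((j:ℕ):ℂ)*((ℓ:ℂ)-((j:ℕ):ℂ)+1) + (((j:ℕ):ℂ)+1)*((ℓ:ℂ)-((j:ℕ):ℂ)))
                * S ℓ ((i:ℕ):ℂ) ((k:ℕ):ℂ)) else 0)) := by
    rw [← Fin.sum_univ_eq_sum_range]
    refine Finset.sum_congr rfl fun i _ => ?_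
    rw [hahnU_apply, Matrix.add_apply, C0, C1, Matrix.of_apply, Matrix.of_apply]
    simp only [Fin.ext_iff]
    by_cases h1 : (i:ℕ)+1 = (j:ℕ) <;> by_cases h2 : (j:ℕ)+1 = (i:ℕ) <;>
        by_cases h3 : (j:ℕ) = (i:ℕ) <;>
      first
      | omega
      | (simp [h1, h2, h3]; try ring; try exact Or.inl trivial)
  rw [hrw, Finset.sum_add_distrib, Finset.sum_add_distrib, sum_ite_pred' j.isLt, sum_ite_succ',
    sum_ite_diag' j.isLt]
  have hb : (((k:ℕ):ℂ)*(((k:ℕ):ℂ)+1) - (ℓ:ℂ)*((ℓ:ℂ)+1)) * tc ℓ ℓ ((j:ℕ):ℂ) ((k:ℕ):ℂ) = 0 := by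
    by_cases hk : (k:ℕ) = ℓ
    · rw [hk, sub_self, zero_mul]
    · rw [tc_top_y (by omega), mul_zero]
  have hm := master2 ℓ ((j:ℕ):ℂ) ((k:ℕ):ℂ) hb
  have e1 : (if 1 ≤ (j:ℕ) then
        ((j:ℕ):ℂ)*((ℓ:ℂ)-((j:ℕ):ℂ)+1) * S ℓ ((((j:ℕ)-1:ℕ)):ℂ) ((k:ℕ):ℂ) else 0)
      = ((ℓ:ℂ)+1-((j:ℕ):ℂ)) * (((j:ℕ):ℂ) * S ℓ (((j:ℕ):ℂ)-1) ((k:ℕ):ℂ)) := by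
    by_cases hj0 : 1 ≤ (j:ℕ)
    · rw [if_pos hj0, Nat.cast_sub hj0, Nat.cast_one]
      ring
    · rw [if_neg hj0, show ((j:ℕ):ℂ) = 0 from by rw [(by omega : (j:ℕ) = 0), Nat.cast_zero]]
      ring
  have e2 : (if (j:ℕ)+1 < ℓ+1 then
        (((j:ℕ):ℂ)+1)*((ℓ:ℂ)-((j:ℕ):ℂ)) * S ℓ ((((j:ℕ)+1:ℕ)):ℂ) ((k:ℕ):ℂ) else 0)
      = (((j:ℕ):ℂ)+1)*((ℓ:ℂ)-((j:ℕ):ℂ)) * S ℓ (((j:ℕ):ℂ)+1) ((k:ℕ):ℂ) := by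
    by_cases hjl' : (j:ℕ)+1 < ℓ+1
    · rw [if_pos hjl', show (((j:ℕ)+1:ℕ):ℂ) = ((j:ℕ):ℂ)+1 from by push_cast; ring]
    · rw [if_neg hjl', show ((j:ℕ):ℂ) = (ℓ:ℂ) from by rw [(by omega : (j:ℕ) = ℓ)]]
      ring
  rw [e1, e2]
  linear_combination hm

/-! ### Identity 3 -/

lemma id3 (ℓ : ℕ) :
    (C1 ℓ - C0 ℓ) * hahnU ℓ = hahnU ℓ * (Q1 ℓ * Jmat ℓ - Q0 ℓ * (Jmat ℓ + 1)) := by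
  ext j k
  have hjl : (j:ℕ) ≤ ℓ := Nat.lt_succ_iff.1 j.isLt
  have hkl : (k:ℕ) ≤ ℓ := Nat.lt_succ_iff.1 k.isLt
  have hy : (2*((k:ℕ):ℂ)+1) ≠ 0 := by
    have h' : ((2*(k:ℕ)+1 : ℕ):ℂ) ≠ 0 := Nat.cast_ne_zero.2 (by omega)
    intro h
    exact h' (by push_cast; linear_combination h)
  have hJ1 : Jmat ℓ + 1 = Matrix.diagonal (fun i : Fin (ℓ+1) => ((i:ℕ):ℂ)+1) := by
    rw [Jmat, ← Matrix.diagonal_one, Matrix.diagonal_add]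
  rw [Matrix.mul_apply, Matrix.mul_apply]
  have hrwL : (∑ i : Fin (ℓ+1), (C1 ℓ - C0 ℓ) j i * hahnU ℓ i k)
      = ∑ i ∈ Finset.range (ℓ+1),
          ((if i+1 = (j:ℕ) then
              -(((j:ℕ):ℂ)*((ℓ:ℂ)-((j:ℕ):ℂ)+1) * S ℓ ((i:ℕ):ℂ) ((k:ℕ):ℂ)) else 0)
          + (if (j:ℕ)+1 = i then (((j:ℕ):ℂ)+1)*((ℓ:ℂ)-((j:ℕ):ℂ)) * S ℓ ((i:ℕ):ℂ) ((k:ℕ):ℂ) else 0)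
          + (if (j:ℕ) = i then
              (((j:ℕ):ℂ)*((ℓ:ℂ)-((j:ℕ):ℂ)+1) - (((j:ℕ):ℂ)+1)*((ℓ:ℂ)-((j:ℕ):ℂ)))
                * S ℓ ((i:ℕ):ℂ) ((k:ℕ):ℂ) else 0)) := by
    rw [← Fin.sum_univ_eq_sum_range]
    refine Finset.sum_congr rfl fun i _ => ?_
    rw [hahnU_apply, Matrix.sub_apply, C0, C1, Matrix.of_apply, Matrix.of_apply]
    simp only [Fin.ext_iff]
    by_cases h1 : (i:ℕ)+1 = (j:ℕ) <;> by_cases h2 : (j:ℕ)+1 = (i:ℕ) <;>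
        by_cases h3 : (j:ℕ) = (i:ℕ) <;>
      first
      | omega
      | (simp [h1, h2, h3]; try ring; try exact Or.inl trivial)
  have hrwR : (∑ i : Fin (ℓ+1), hahnU ℓ j i * (Q1 ℓ * Jmat ℓ - Q0 ℓ * (Jmat ℓ + 1)) i k)
      = ∑ i ∈ Finset.range (ℓ+1),
          ((if (k:ℕ)+1 = i then
              S ℓ ((j:ℕ):ℂ) ((i:ℕ):ℂ) * (((i:ℕ):ℂ)*((ℓ:ℂ)-((i:ℕ):ℂ)+1)*((k:ℕ):ℂ)/(2*((i:ℕ):ℂ)-1))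
            else 0)
          + (if i+1 = (k:ℕ) then
              -(S ℓ ((j:ℕ):ℂ) ((i:ℕ):ℂ)
                * ((((i:ℕ):ℂ)+1)*((ℓ:ℂ)+((i:ℕ):ℂ)+2)*(((k:ℕ):ℂ)+1)/(2*((i:ℕ):ℂ)+3)))
            else 0)) := by
    rw [← Fin.sum_univ_eq_sum_range]
    refine Finset.sum_congr rfl fun i _ => ?_
    rw [hahnU_apply, Matrix.sub_apply, hJ1, Jmat, Matrix.mul_diagonal, Matrix.mul_diagonal,
      Q0, Q1, Matrix.of_apply, Matrix.of_apply]
    by_cases h1 : (k:ℕ)+1 = (i:ℕ) <;> by_cases h2 : (i:ℕ)+1 = (k:ℕ)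
    · omega
    · rw [if_pos h1, if_pos h1, if_neg h2, if_neg h2]
      ring
    · rw [if_neg h1, if_neg h1, if_pos h2, if_pos h2]
      ring
    · rw [if_neg h1, if_neg h1, if_neg h2, if_neg h2]
      ring
  rw [hrwL, hrwR, Finset.sum_add_distrib, Finset.sum_add_distrib, sum_ite_pred' j.isLt,
    sum_ite_succ', sum_ite_diag' j.isLt, Finset.sum_add_distrib, sum_ite_succ',
    sum_ite_pred' k.isLt]
  have hb : (-(((k:ℕ):ℂ)*(((k:ℕ):ℂ)+1)) + 2*(ℓ:ℂ)*((j:ℕ):ℂ) - (ℓ:ℂ)*((ℓ:ℂ)-1))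
      * tc ℓ ℓ ((j:ℕ):ℂ) ((k:ℕ):ℂ) = 0 := by
    by_cases hk : (k:ℕ) = ℓ
    · by_cases hj : (j:ℕ) = ℓ
      · rw [hk, hj, show (-((ℓ:ℂ)*((ℓ:ℂ)+1)) + 2*(ℓ:ℂ)*(ℓ:ℂ) - (ℓ:ℂ)*((ℓ:ℂ)-1)) = 0
          from by ring, zero_mul]
      · rw [tc_top_x (by omega), mul_zero]
    · rw [tc_top_y (by omega), mul_zero]
  have hm := master3 ℓ ((j:ℕ):ℂ) ((k:ℕ):ℂ) hb
  have e1 : (if 1 ≤ (j:ℕ) then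
        -(((j:ℕ):ℂ)*((ℓ:ℂ)-((j:ℕ):ℂ)+1) * S ℓ ((((j:ℕ)-1:ℕ)):ℂ) ((k:ℕ):ℂ)) else 0)
      = -(((ℓ:ℂ)+1-((j:ℕ):ℂ)) * (((j:ℕ):ℂ) * S ℓ (((j:ℕ):ℂ)-1) ((k:ℕ):ℂ))) := by
    by_cases hj0 : 1 ≤ (j:ℕ)
    · rw [if_pos hj0, Nat.cast_sub hj0, Nat.cast_one]
      ring
    · rw [if_neg hj0, show ((j:ℕ):ℂ) = 0 from by rw [(by omega : (j:ℕ) = 0), Nat.cast_zero]]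
      ring
  have e2 : (if (j:ℕ)+1 < ℓ+1 then
        (((j:ℕ):ℂ)+1)*((ℓ:ℂ)-((j:ℕ):ℂ)) * S ℓ ((((j:ℕ)+1:ℕ)):ℂ) ((k:ℕ):ℂ) else 0)
      = (((j:ℕ):ℂ)+1)*((ℓ:ℂ)-((j:ℕ):ℂ)) * S ℓ (((j:ℕ):ℂ)+1) ((k:ℕ):ℂ) := by
    by_cases hjl' : (j:ℕ)+1 < ℓ+1
    · rw [if_pos hjl', show (((j:ℕ)+1:ℕ):ℂ) = ((j:ℕ):ℂ)+1 from by push_cast; ring]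
    · rw [if_neg hjl', show ((j:ℕ):ℂ) = (ℓ:ℂ) from by rw [(by omega : (j:ℕ) = ℓ)]]
      ring
  have e3 : (if (k:ℕ)+1 < ℓ+1 then
        S ℓ ((j:ℕ):ℂ) ((((k:ℕ)+1:ℕ)):ℂ)
          * (((((k:ℕ)+1:ℕ)):ℂ)*((ℓ:ℂ)-((((k:ℕ)+1:ℕ)):ℂ)+1)*((k:ℕ):ℂ)/(2*((((k:ℕ)+1:ℕ)):ℂ)-1))
        else 0)
      = S ℓ ((j:ℕ):ℂ) (((k:ℕ):ℂ)+1)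
          * (((k:ℕ):ℂ)*(((k:ℕ):ℂ)+1)*((ℓ:ℂ)-((k:ℕ):ℂ)) / (2*((k:ℕ):ℂ)+1)) := by
    by_cases hkl' : (k:ℕ)+1 < ℓ+1
    · rw [if_pos hkl', show (((k:ℕ)+1:ℕ):ℂ) = ((k:ℕ):ℂ)+1 from by push_cast; ring,
        show (((k:ℕ):ℂ)+1)*((ℓ:ℂ)-(((k:ℕ):ℂ)+1)+1)*((k:ℕ):ℂ)
          = ((k:ℕ):ℂ)*(((k:ℕ):ℂ)+1)*((ℓ:ℂ)-((k:ℕ):ℂ)) from by ring,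
        show 2*(((k:ℕ):ℂ)+1)-1 = 2*((k:ℕ):ℂ)+1 from by ring]
    · rw [if_neg hkl', show ((k:ℕ):ℂ) = (ℓ:ℂ) from by rw [(by omega : (k:ℕ) = ℓ)]]
      ring
  have e4 : (if 1 ≤ (k:ℕ) then
        -(S ℓ ((j:ℕ):ℂ) ((((k:ℕ)-1:ℕ)):ℂ)
          * ((((((k:ℕ)-1:ℕ)):ℂ)+1)*((ℓ:ℂ)+((((k:ℕ)-1:ℕ)):ℂ)+2)*(((k:ℕ):ℂ)+1)/(2*((((k:ℕ)-1:ℕ)):ℂ)+3)))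
        else 0)
      = -(S ℓ ((j:ℕ):ℂ) (((k:ℕ):ℂ)-1)
          * (((k:ℕ):ℂ)*(((k:ℕ):ℂ)+1)*((ℓ:ℂ)+((k:ℕ):ℂ)+1) / (2*((k:ℕ):ℂ)+1))) := by
    by_cases hk0 : 1 ≤ (k:ℕ)
    · rw [if_pos hk0, Nat.cast_sub hk0, Nat.cast_one,
        show 2*(((k:ℕ):ℂ)-1)+3 = 2*((k:ℕ):ℂ)+1 from by ring,
        show ((((k:ℕ):ℂ)-1)+1)*((ℓ:ℂ)+(((k:ℕ):ℂ)-1)+2)*(((k:ℕ):ℂ)+1)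
          = ((k:ℕ):ℂ)*(((k:ℕ):ℂ)+1)*((ℓ:ℂ)+((k:ℕ):ℂ)+1) from by ring]
    · rw [if_neg hk0, show ((k:ℕ):ℂ) = 0 from by rw [(by omega : (k:ℕ) = 0), Nat.cast_zero]]
      ring
  rw [e1, e2, e3, e4, ← mul_div_assoc, ← mul_div_assoc, ← neg_div, ← add_div,
    eq_div_iff hy]
  linear_combination hm

/-- Lemma 3.7 (Hahn polynomial matrix identities): `A₀U = U(Q₀+Q₁)`,
`(C₁+C₀)U = -U V₀`, and `(C₁-C₀)U = U(Q₁J - Q₀(J+1))`. -/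
theorem hahn_matrix_identities (ℓ : ℕ) :
    A0 ℓ * hahnU ℓ = hahnU ℓ * (Q0 ℓ + Q1 ℓ) ∧
    (C1 ℓ + C0 ℓ) * hahnU ℓ = -(hahnU ℓ * V0 ℓ) ∧
    (C1 ℓ - C0 ℓ) * hahnU ℓ = hahnU ℓ * (Q1 ℓ * Jmat ℓ - Q0 ℓ * (Jmat ℓ + 1)) :=
  ⟨id1 ℓ, id2 ℓ, id3 ℓ⟩

end Stmt0
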